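/- Let G be a finite non-cyclic 2-group such that G has at most one maximal cyclic subgroup of order greater than 4, and such that every pair of distinct maximal cyclic subgroups of G of order greater than 2 has nontrivial intersection. Then the power graph P(G) has no cyclic vertex cutset, i.e., P(G) is not cyclically separable. -/

import Mathlib

/-- The power graph of a group `G`: distinct `x, y` are adjacent iff one is a power
of the other. -/
def powerGraph (G : Type*) [Group G] : SimpleGraph G where
  Adj x y := x ≠ y ∧ (x ∈ Subgroup.zpowers y ∨ y ∈ Subgroup.zpowers x)
  symm := ⟨fun _ _ h => ⟨h.1.symm, h.2.symm⟩⟩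
  loopless := ⟨fun _ h => h.1 rfl⟩

/-- The enhanced power graph of a group `G`: distinct `x, y` are adjacent iff they
lie in a common cyclic subgroup. -/
def enhancedPowerGraph (G : Type*) [Group G] : SimpleGraph G where
  Adj x y := x ≠ y ∧ ∃ z : G, x ∈ Subgroup.zpowers z ∧ y ∈ Subgroup.zpowers z
  symm := ⟨fun _ _ h => ⟨h.1.symm, h.2.choose, h.2.choose_spec.2, h.2.choose_spec.1⟩⟩
  loopless := ⟨fun _ h => h.1 rfl⟩

/-- A subgroup is a maximal cyclic subgroup if it is cyclic and not properly contained
in any other cyclic subgroup. -/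
def IsMaximalCyclic {G : Type*} [Group G] (M : Subgroup G) : Prop :=
  (∃ x : G, M = Subgroup.zpowers x) ∧
    ∀ N : Subgroup G, (∃ y : G, N = Subgroup.zpowers y) → M ≤ N → M = N

/-- The difference number `∂(G)`: the maximum of
`min (|M \ N|, |N \ M|)` over pairs of maximal cyclic subgroups `M, N`. -/
noncomputable def diffNumber (G : Type*) [Group G] : ℕ :=
  sSup { n : ℕ | ∃ M N : Subgroup G, IsMaximalCyclic M ∧ IsMaximalCyclic N ∧
    n = min (((M : Set G) \ (N : Set G)).ncard) (((N : Set G) \ (M : Set G)).ncard) }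

/-- A graph has a cycle. -/
def HasCycle {V : Type*} (Γ : SimpleGraph V) : Prop :=
  ∃ (v : V) (w : Γ.Walk v v), w.IsCycle

/-- `S` is a cyclic vertex cutset of `Γ` if `Γ - S` is disconnected and at least two
of its connected components contain a cycle. -/
def IsCyclicVertexCutset {V : Type*} (Γ : SimpleGraph V) (S : Set V) : Prop :=
  ¬ (Γ.induce Sᶜ).Connected ∧
    ∃ u v : ↥Sᶜ, ¬ (Γ.induce Sᶜ).Reachable u v ∧
      (∃ w : (Γ.induce Sᶜ).Walk u u, w.IsCycle) ∧
      (∃ w : (Γ.induce Sᶜ).Walk v v, w.IsCycle)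

/-- A graph is cyclically separable if it has a cyclic vertex cutset. -/
def CyclicallySeparable {V : Type*} (Γ : SimpleGraph V) : Prop :=
  ∃ S : Set V, IsCyclicVertexCutset Γ S

/-- The cyclic vertex connectivity: the minimum cardinality of a cyclic vertex cutset,
`⊤ = ∞` if there is none. -/
noncomputable def cyclicVertexConnectivity {V : Type*} (Γ : SimpleGraph V) : ℕ∞ :=
  ⨅ S ∈ {S : Set V | IsCyclicVertexCutset Γ S}, (S.ncard : ℕ∞)

/-- The vertex connectivity: the minimum number of vertices whose deletion results in a
disconnected or trivial graph. -/
noncomputable def vertexConnectivity {V : Type*} (Γ : SimpleGraph V) : ℕ :=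
  sInf { n : ℕ | ∃ S : Set V, S.ncard = n ∧
    ((Sᶜ : Set V).Subsingleton ∨ ¬ (Γ.induce Sᶜ).Connected) }

section Helpers

open Subgroup SimpleGraph

variable {G : Type*} [Group G]

private lemma isCyclic_zpowers' (g : G) : IsCyclic (Subgroup.zpowers g) := by
  refine ⟨⟨g, Subgroup.mem_zpowers g⟩, fun x => ?_⟩
  obtain ⟨n, hn⟩ := Subgroup.mem_zpowers_iff.mp x.2
  exact Subgroup.mem_zpowers_iff.mpr ⟨n, by ext; simpa using hn⟩

variable [Finite G]

private lemma mem_zpowers_of_orderOf_dvd' {g x y : G} (hx : x ∈ Subgroup.zpowers g)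
    (hy : y ∈ Subgroup.zpowers g) (hd : orderOf x ∣ orderOf y) : x ∈ Subgroup.zpowers y := by
  classical
  haveI : Fintype (Subgroup.zpowers g) := Fintype.ofFinite _
  haveI : IsCyclic (Subgroup.zpowers g) := isCyclic_zpowers' g
  set H := Subgroup.zpowers g with hH
  set a : H := ⟨x, hx⟩ with ha0
  set b : H := ⟨y, hy⟩ with hb0
  have hd' : orderOf a ∣ orderOf b := by
    rwa [ha0, hb0, orderOf_mk, orderOf_mk]
  have hb0' : 0 < orderOf b := orderOf_pos b
  have hsub : (Subgroup.zpowers b : Set H).toFinset ⊆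
      Finset.univ.filter (fun z : H => z ^ orderOf b = 1) := by
    intro z hz
    rw [Set.mem_toFinset, SetLike.mem_coe] at hz
    simp only [Finset.mem_filter, Finset.mem_univ, true_and]
    exact orderOf_dvd_iff_pow_eq_one.mp (orderOf_dvd_of_mem_zpowers hz)
  have hcard : (Subgroup.zpowers b : Set H).toFinset.card = orderOf b := by
    rw [Set.toFinset_card, Fintype.card_eq_nat_card]
    exact Nat.card_zpowers b
  have hle : (Finset.univ.filter (fun z : H => z ^ orderOf b = 1)).card ≤
      (Subgroup.zpowers b : Set H).toFinset.card := by
    rw [hcard]; exact IsCyclic.card_pow_eq_one_le hb0'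
  have heq := Finset.eq_of_subset_of_card_le hsub hle
  have hamem : a ∈ Finset.univ.filter (fun z : H => z ^ orderOf b = 1) := by
    simp only [Finset.mem_filter, Finset.mem_univ, true_and]
    exact orderOf_dvd_iff_pow_eq_one.mp hd'
  rw [← heq, Set.mem_toFinset, SetLike.mem_coe] at hamem
  obtain ⟨n, hn⟩ := Subgroup.mem_zpowers_iff.mp hamem
  refine Subgroup.mem_zpowers_iff.mpr ⟨n, ?_⟩
  have := congrArg (Subtype.val) hn
  simpa using this

private lemma order_two_pow' (hG : IsPGroup 2 G) (x : G) : ∃ k, orderOf x = 2 ^ k := by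
  haveI : Fact (Nat.Prime 2) := ⟨Nat.prime_two⟩
  exact IsPGroup.iff_orderOf.mp hG x

private lemma comparable' (hG : IsPGroup 2 G) {g x y : G} (hx : x ∈ Subgroup.zpowers g)
    (hy : y ∈ Subgroup.zpowers g) : x ∈ Subgroup.zpowers y ∨ y ∈ Subgroup.zpowers x := by
  obtain ⟨a, ha⟩ := order_two_pow' hG x
  obtain ⟨b, hb⟩ := order_two_pow' hG y
  rcases le_total a b with h | h
  · exact Or.inl (mem_zpowers_of_orderOf_dvd' hx hy (by rw [ha, hb]; exact pow_dvd_pow 2 h))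
  · exact Or.inr (mem_zpowers_of_orderOf_dvd' hy hx (by rw [ha, hb]; exact pow_dvd_pow 2 h))

private lemma invol_unique' (hG : IsPGroup 2 G) {g a b : G} (ha : a ∈ Subgroup.zpowers g)
    (hb : b ∈ Subgroup.zpowers g) (ha2 : orderOf a = 2) (hb2 : orderOf b = 2) : a = b := by
  have key : ∀ {c d : G}, c ∈ Subgroup.zpowers d → orderOf c = 2 → orderOf d = 2 → c = d := by
    intro c d hcd hc2 hd2
    obtain ⟨n, hn⟩ := mem_powers_iff_mem_zpowers.mpr hcd
    have h2' : d ^ (n % 2) = c := by rw [← hn, ← hd2, pow_mod_orderOf]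
    have hlt : n % 2 < 2 := Nat.mod_lt _ (by norm_num)
    interval_cases h : n % 2
    · rw [pow_zero] at h2'
      rw [← h2'] at hc2; simp at hc2
    · rw [pow_one] at h2'; exact h2'.symm
  rcases comparable' hG ha hb with h | h
  · exact key h ha2 hb2
  · exact (key h hb2 ha2).symm

private lemma exists_invol' (hG : IsPGroup 2 G) {g : G} (hg : g ≠ 1) :
    ∃ t, t ∈ Subgroup.zpowers g ∧ orderOf t = 2 := by
  haveI : Fact (Nat.Prime 2) := ⟨Nat.prime_two⟩
  obtain ⟨k, hk⟩ := order_two_pow' hG g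
  have hk0 : k ≠ 0 := by
    rintro rfl
    rw [pow_zero] at hk
    exact hg (orderOf_eq_one_iff.mp hk)
  refine ⟨g ^ (2 ^ (k - 1)), (Subgroup.zpowers g).pow_mem (Subgroup.mem_zpowers g) _, ?_⟩
  have hsq : (g ^ (2 ^ (k - 1))) ^ 2 = 1 := by
    rw [← pow_mul, ← pow_succ]
    have : k - 1 + 1 = k := Nat.succ_pred_eq_of_pos (Nat.pos_of_ne_zero hk0)
    rw [this, ← hk, pow_orderOf_eq_one]
  have hne : g ^ (2 ^ (k - 1)) ≠ 1 := by
    intro h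
    have hdvd := orderOf_dvd_of_pow_eq_one h
    rw [hk] at hdvd
    have := (Nat.pow_dvd_pow_iff_le_right (by norm_num : 1 < 2)).mp hdvd
    omega
  exact orderOf_eq_prime hsq hne

private lemma four_le_order (hG : IsPGroup 2 G) {x : G} (h1 : orderOf x ≠ 1)
    (h2 : orderOf x ≠ 2) : 4 ≤ orderOf x := by
  obtain ⟨k, hk⟩ := order_two_pow' hG x
  rcases k with _ | _ | k
  · rw [pow_zero] at hk; exact absurd hk h1
  · rw [pow_one] at hk; exact absurd hk h2
  · rw [hk]
    calc 4 = 2 ^ 2 := by norm_num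
    _ ≤ 2 ^ (k + 2) := Nat.pow_le_pow_right (by norm_num) (by omega)

private lemma exists_maximal_cyclic (x : G) : ∃ M, IsMaximalCyclic M ∧ x ∈ M := by
  classical
  have hfin : ({g : G | x ∈ Subgroup.zpowers g}).Finite := Set.toFinite _
  have hne : ({g : G | x ∈ Subgroup.zpowers g}).Nonempty := ⟨x, Subgroup.mem_zpowers x⟩
  obtain ⟨g0, hg0, hmax⟩ :=
    Set.Finite.exists_maximalFor (fun g => Nat.card (Subgroup.zpowers g)) _ hfin hne
  refine ⟨Subgroup.zpowers g0, ⟨⟨g0, rfl⟩, ?_⟩, hg0⟩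
  rintro N ⟨y, rfl⟩ hle
  have hxy : x ∈ Subgroup.zpowers y := hle hg0
  have hcardle : Nat.card (Subgroup.zpowers g0) ≤ Nat.card (Subgroup.zpowers y) :=
    Subgroup.card_le_of_le hle
  have := hmax (j := y) hxy hcardle
  exact Subgroup.eq_of_le_of_card_ge hle this.ge

private lemma flip_mem' {a b : G} (hab : a ∈ Subgroup.zpowers b)
    (h : orderOf b ≤ orderOf a) : b ∈ Subgroup.zpowers a := by
  have hle : Subgroup.zpowers a ≤ Subgroup.zpowers b := Subgroup.zpowers_le.mpr hab
  have hcard : Nat.card (Subgroup.zpowers b) ≤ Nat.card (Subgroup.zpowers a) := by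
    rw [Nat.card_zpowers, Nat.card_zpowers]; exact h
  have := Subgroup.eq_of_le_of_card_ge hle hcard
  rw [this]
  exact Subgroup.mem_zpowers b

private lemma order_le_card {x : G} {M : Subgroup G} (hx : x ∈ M) :
    orderOf x ≤ Nat.card M := by
  rw [← Nat.card_zpowers]
  exact Subgroup.card_le_of_le (Subgroup.zpowers_le.mpr hx)

private lemma common_invol (hG : IsPGroup 2 G)
    (h2 : ∀ M N : Subgroup G, IsMaximalCyclic M → IsMaximalCyclic N → M ≠ N →
      2 < Nat.card M → 2 < Nat.card N → M ⊓ N ≠ ⊥)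
    {x y : G} (hx : 4 ≤ orderOf x) (hy : 4 ≤ orderOf y) :
    ∃ t : G, orderOf t = 2 ∧ t ∈ Subgroup.zpowers x ∧ t ∈ Subgroup.zpowers y := by
  obtain ⟨M, hM, hxM⟩ := exists_maximal_cyclic x
  obtain ⟨N, hN, hyN⟩ := exists_maximal_cyclic y
  have hx1 : x ≠ 1 := by intro h; rw [h, orderOf_one] at hx; omega
  have hy1 : y ≠ 1 := by intro h; rw [h, orderOf_one] at hy; omega
  obtain ⟨tx, htxm, htx2⟩ := exists_invol' hG hx1
  obtain ⟨ty, htym, hty2⟩ := exists_invol' hG hy1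
  obtain ⟨m, hm⟩ := hM.1
  obtain ⟨n, hn⟩ := hN.1
  have htxM : tx ∈ M := (Subgroup.zpowers_le.mpr hxM) htxm
  have htyN : ty ∈ N := (Subgroup.zpowers_le.mpr hyN) htym
  by_cases hMN : M = N
  · have htyM : ty ∈ M := hMN ▸ htyN
    have : tx = ty := invol_unique' hG (hm ▸ htxM) (hm ▸ htyM) htx2 hty2
    exact ⟨tx, htx2, htxm, this ▸ htym⟩
  · have hcM : 2 < Nat.card M := lt_of_lt_of_le (by omega) (le_trans hx (order_le_card hxM))
    have hcN : 2 < Nat.card N := lt_of_lt_of_le (by omega) (le_trans hy (order_le_card hyN))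
    have hbot := h2 M N hM hN hMN hcM hcN
    obtain ⟨z, hz1⟩ := Subgroup.ne_bot_iff_exists_ne_one.mp hbot
    have hz1' : (z : G) ≠ 1 := by
      intro h; apply hz1; ext; simpa using h
    obtain ⟨tz, htzm, htz2⟩ := exists_invol' hG hz1'
    have htzM : tz ∈ M := (Subgroup.zpowers_le.mpr (z.2.1)) htzm
    have htzN : tz ∈ N := (Subgroup.zpowers_le.mpr (z.2.2)) htzm
    have h1 : tx = tz := invol_unique' hG (hm ▸ htxM) (hm ▸ htzM) htx2 htz2
    have h2' : ty = tz := invol_unique' hG (hn ▸ htyN) (hn ▸ htzN) hty2 htz2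
    exact ⟨tz, htz2, h1 ▸ htxm, h2' ▸ htym⟩

private lemma edge_struct (hG : IsPGroup 2 G) {a b : G} (hab : a ≠ b)
    (hmem : b ∈ Subgroup.zpowers a) (ha1 : a ≠ 1) (hb1 : b ≠ 1) : 4 ≤ orderOf a := by
  refine four_le_order hG (fun h => ha1 (orderOf_eq_one_iff.mp h)) (fun h => ?_)
  have hbd : orderOf b ∣ 2 := h ▸ orderOf_dvd_of_mem_zpowers hmem
  have hb2 : orderOf b = 2 := by
    rcases (Nat.prime_two.eq_one_or_self_of_dvd _ hbd) with h' | h'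
    · exact absurd (orderOf_eq_one_iff.mp h') hb1
    · exact h'
  exact hab (invol_unique' hG (Subgroup.mem_zpowers a) hmem h hb2)

private lemma eq_pow3_of_order4 {u p : G} (hu : orderOf u = 4) (hp : p ∈ Subgroup.zpowers u)
    (hp4 : orderOf p = 4) (hpu : p ≠ u) : p = u ^ 3 := by
  obtain ⟨n, hn⟩ := mem_powers_iff_mem_zpowers.mpr hp
  have h4 : u ^ (n % 4) = p := by rw [← hn, ← hu, pow_mod_orderOf]
  have hlt : n % 4 < 4 := Nat.mod_lt _ (by norm_num)
  interval_cases h : n % 4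
  · rw [pow_zero] at h4; rw [← h4] at hp4; simp at hp4
  · rw [pow_one] at h4; exact absurd h4.symm hpu
  · exfalso
    have : p ^ 2 = 1 := by
      rw [← h4, ← pow_mul]
      have : (2 : ℕ) * 2 = 4 := by norm_num
      rw [this, ← hu, pow_orderOf_eq_one]
    have := orderOf_dvd_of_pow_eq_one this
    rw [hp4] at this
    omega
  · exact h4.symm

end Helpers

section WalkHelpers

open SimpleGraph

variable {V : Type*} {Γ : SimpleGraph V}

private lemma end_mem_tail' : ∀ {a b : V} (q : Γ.Walk a b), ¬ q.Nil → b ∈ q.support.tail := by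
  intro a b q hq
  cases q with
  | nil => exact absurd SimpleGraph.Walk.Nil.nil hq
  | cons h r => simpa [SimpleGraph.Walk.support_cons] using r.end_mem_support

private lemma cycle_mid {u : V} {w : Γ.Walk u u} (hw : w.IsCycle) :
    ∃ b c : V, Γ.Adj u b ∧ Γ.Adj b c ∧ u ≠ c ∧ b ∈ w.support ∧ c ∈ w.support := by
  cases w with
  | nil => exact absurd hw SimpleGraph.Walk.IsCycle.not_of_nil
  | @cons _ b _ h p =>
    cases p with
    | nil => have := hw.three_le_length; simp at this
    | @cons _ c _ h2 q =>
      have hnd := hw.support_nodup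
      simp only [SimpleGraph.Walk.support_cons, List.tail_cons] at hnd
      rw [List.nodup_cons] at hnd
      have huc : u ≠ c := by
        intro huc
        have hql : ¬ q.Nil := by
          intro hn
          have h3 := hw.three_le_length
          rw [SimpleGraph.Walk.nil_iff_length_eq] at hn
          simp [SimpleGraph.Walk.length_cons, hn] at h3
        have hmem : u ∈ q.support.tail := end_mem_tail' q hql
        have hqs : q.support = c :: q.support.tail := q.support_eq_cons
        have hqnd := hnd.2
        rw [hqs, List.nodup_cons] at hqnd
        exact hqnd.1 (huc ▸ hmem)
      refine ⟨b, c, h, h2, huc, ?_, ?_⟩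
      · simp [SimpleGraph.Walk.support_cons]
      · simp [SimpleGraph.Walk.support_cons, q.start_mem_support]

private lemma adj_of_mem_support' {u c : V} {w : Γ.Walk u u} (hw : w.IsCycle)
    (hc : c ∈ w.support) : ∃ d, Γ.Adj c d := by
  classical
  by_cases hcu : c = u
  · subst hcu
    exact ⟨_, SimpleGraph.Walk.adj_snd hw.not_nil⟩
  · exact ⟨_, SimpleGraph.Walk.adj_snd
      (SimpleGraph.Walk.not_nil_of_ne hcu (p := w.dropUntil c hc))⟩

private lemma reachable_of_mem_support' {u c : V} (w : Γ.Walk u u) (hc : c ∈ w.support) :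
    Γ.Reachable u c := by
  classical
  exact ⟨w.takeUntil c hc⟩

end WalkHelpers

/-- A finite non-cyclic 2-group with at most one maximal cyclic subgroup of order
greater than 4, in which every pair of distinct maximal cyclic subgroups of order
greater than 2 has nontrivial intersection, has a power graph that is not cyclically
separable. -/
theorem two_group_not_cyclically_separable
    (G : Type*) [Group G] [Finite G] (hG : IsPGroup 2 G) (hnc : ¬ IsCyclic G)
    (h4 : ∀ M N : Subgroup G, IsMaximalCyclic M → IsMaximalCyclic N →
      4 < Nat.card M → 4 < Nat.card N → M = N)
    (h2 : ∀ M N : Subgroup G, IsMaximalCyclic M → IsMaximalCyclic N → M ≠ N →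
      2 < Nat.card M → 2 < Nat.card N → M ⊓ N ≠ ⊥) :
    ¬ CyclicallySeparable (powerGraph G) := by
  haveI : Fact (Nat.Prime 2) := ⟨Nat.prime_two⟩
  rintro ⟨S, hdisc, u, v, hur, ⟨wu, hwu⟩, ⟨wv, hwv⟩⟩
  classical
  have adj_iff : ∀ a b : ↥Sᶜ, ((powerGraph G).induce Sᶜ).Adj a b ↔
      ((a : G) ≠ (b : G) ∧
        ((a : G) ∈ Subgroup.zpowers (b : G) ∨ (b : G) ∈ Subgroup.zpowers (a : G))) :=
    fun a b => Iff.rfl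
  -- the identity must be in the cutset
  have h1S : (1 : G) ∈ S := by
    by_contra h1
    apply hdisc
    have h1c : (1 : G) ∈ Sᶜ := h1
    haveI : Nonempty ↥Sᶜ := ⟨⟨1, h1c⟩⟩
    have hre : ∀ a : ↥Sᶜ, ((powerGraph G).induce Sᶜ).Reachable a ⟨1, h1c⟩ := by
      intro a
      by_cases ha : (a : G) = 1
      · have : a = ⟨1, h1c⟩ := Subtype.ext ha
        rw [this]
      · exact SimpleGraph.Adj.reachable
          ((adj_iff a ⟨1, h1c⟩).mpr ⟨ha, Or.inr (Subgroup.one_mem _)⟩)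
    exact ⟨fun a b => (hre a).trans (hre b).symm⟩
  have hne1 : ∀ a : ↥Sᶜ, (a : G) ≠ 1 := fun a ha => a.2 (by rw [ha]; exact h1S)
  -- each cycle contains a vertex of order at least 4
  have extract : ∀ (z : ↥Sᶜ) (w : ((powerGraph G).induce Sᶜ).Walk z z), w.IsCycle →
      ∃ x : ↥Sᶜ, 4 ≤ orderOf (x : G) ∧ ((powerGraph G).induce Sᶜ).Reachable z x := by
    intro z w hw
    have hadj : ((powerGraph G).induce Sᶜ).Adj z (w.getVert 1) := SimpleGraph.Walk.adj_snd hw.not_nil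
    set b := w.getVert 1 with hb
    obtain ⟨hne, hor⟩ := (adj_iff z b).mp hadj
    rcases hor with h | h
    · exact ⟨b, edge_struct hG (fun hh => hne hh.symm) h (hne1 b) (hne1 z), hadj.reachable⟩
    · exact ⟨z, edge_struct hG hne h (hne1 z) (hne1 b), SimpleGraph.Reachable.refl z⟩
  obtain ⟨x1, hx1o, hux1⟩ := extract u wu hwu
  obtain ⟨x2, hx2o, hvx2⟩ := extract v wv hwv
  obtain ⟨t, ht2, htx1, htx2⟩ := common_invol hG h2 hx1o hx2o
  by_cases htS : t ∈ S
  · -- the common involution is in the cutset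
    have hsupp : ∀ (z : ↥Sᶜ) (w : ((powerGraph G).induce Sᶜ).Walk z z), w.IsCycle →
        ∀ c : ↥Sᶜ, c ∈ w.support → 4 ≤ orderOf (c : G) := by
      intro z w hw c hc
      obtain ⟨d, hd⟩ := adj_of_mem_support' hw hc
      obtain ⟨hnecd, hor⟩ := (adj_iff c d).mp hd
      refine four_le_order hG (fun h => hne1 c (orderOf_eq_one_iff.mp h)) (fun hc2 => ?_)
      have hcd : (c : G) ∈ Subgroup.zpowers (d : G) := by
        rcases hor with h | h
        · exact h
        · exfalso
          have hd2 : orderOf (d : G) = 2 := by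
            have hdvd : orderOf (d : G) ∣ 2 := hc2 ▸ orderOf_dvd_of_mem_zpowers h
            rcases Nat.prime_two.eq_one_or_self_of_dvd _ hdvd with h' | h'
            · exact absurd (orderOf_eq_one_iff.mp h') (hne1 d)
            · exact h'
          exact hnecd (invol_unique' hG (Subgroup.mem_zpowers ((c : G))) h hc2 hd2)
      have hd4 : 4 ≤ orderOf (d : G) :=
        edge_struct hG (fun hh => hnecd hh.symm) hcd (hne1 d) (hne1 c)
      obtain ⟨t', ht'2, ht'd, ht'x1⟩ := common_invol hG h2 hd4 hx1o
      have hct' : (c : G) = t' := invol_unique' hG hcd ht'd hc2 ht'2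
      have htt' : t = t' := invol_unique' hG htx1 ht'x1 ht2 ht'2
      exact c.2 (by rw [hct', ← htt']; exact htS)
    -- each cycle contains a vertex of order at least 8
    have h8 : ∀ (z : ↥Sᶜ) (w : ((powerGraph G).induce Sᶜ).Walk z z), w.IsCycle →
        ∃ y : ↥Sᶜ, 8 ≤ orderOf (y : G) ∧ ((powerGraph G).induce Sᶜ).Reachable z y := by
      intro z w hw
      obtain ⟨b, c, hzb, hbc, hzc, hbs, hcs⟩ := cycle_mid hw
      have hzo : 4 ≤ orderOf (z : G) := hsupp z w hw z w.start_mem_support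
      have hbo := hsupp z w hw b hbs
      have hco := hsupp z w hw c hcs
      by_cases h8z : 8 ≤ orderOf (z : G)
      · exact ⟨z, h8z, SimpleGraph.Reachable.refl z⟩
      by_cases h8b : 8 ≤ orderOf (b : G)
      · exact ⟨b, h8b, hzb.reachable⟩
      by_cases h8c : 8 ≤ orderOf (c : G)
      · exact ⟨c, h8c, hzb.reachable.trans hbc.reachable⟩
      exfalso
      have e4 : ∀ x : G, 4 ≤ orderOf x → ¬ 8 ≤ orderOf x → orderOf x = 4 := by
        intro x h4' h8'
        obtain ⟨k, hk⟩ := order_two_pow' hG x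
        rcases k with _ | _ | _ | k
        · rw [pow_zero] at hk; omega
        · rw [pow_one] at hk; omega
        · rw [hk]; norm_num
        · exfalso; apply h8'; rw [hk]
          calc 8 = 2 ^ 3 := by norm_num
          _ ≤ 2 ^ (k + 3) := Nat.pow_le_pow_right (by norm_num) (by omega)
      have hz4 := e4 _ hzo h8z
      have hb4 := e4 _ hbo h8b
      have hc4 := e4 _ hco h8c
      have hmem : ∀ {p q : ↥Sᶜ}, ((powerGraph G).induce Sᶜ).Adj p q → orderOf (p : G) = 4 → orderOf (q : G) = 4 →
          (p : G) ∈ Subgroup.zpowers (q : G) := by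
        intro p q hpq hp4 hq4
        obtain ⟨hne, hor⟩ := (adj_iff p q).mp hpq
        rcases hor with h | h
        · exact h
        · exact flip_mem' h (by omega)
      have hm1 : (z : G) ∈ Subgroup.zpowers (b : G) := hmem hzb hz4 hb4
      have hm2 : (c : G) ∈ Subgroup.zpowers (b : G) := hmem hbc.symm hc4 hb4
      have hzb' : (z : G) ≠ (b : G) := ((adj_iff z b).mp hzb).1
      have hcb' : (c : G) ≠ (b : G) := fun hh => ((adj_iff b c).mp hbc).1 hh.symm
      have e1 := eq_pow3_of_order4 hb4 hm1 hz4 hzb'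
      have e2 := eq_pow3_of_order4 hb4 hm2 hc4 hcb'
      exact hzc (Subtype.ext (e1.trans e2.symm))
    obtain ⟨z1, hz1o, huz1⟩ := h8 u wu hwu
    obtain ⟨z2, hz2o, hvz2⟩ := h8 v wv hwv
    obtain ⟨M1, hM1, hz1M⟩ := exists_maximal_cyclic ((z1 : G))
    obtain ⟨M2, hM2, hz2M⟩ := exists_maximal_cyclic ((z2 : G))
    have hc1 : 4 < Nat.card M1 :=
      lt_of_lt_of_le (by omega) (le_trans hz1o (order_le_card hz1M))
    have hc2' : 4 < Nat.card M2 :=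
      lt_of_lt_of_le (by omega) (le_trans hz2o (order_le_card hz2M))
    have hMM := h4 M1 M2 hM1 hM2 hc1 hc2'
    obtain ⟨m, hm⟩ := hM1.1
    have hz2M1 : (z2 : G) ∈ M1 := hMM ▸ hz2M
    have hcomp := comparable' hG (hm ▸ hz1M) (hm ▸ hz2M1)
    have hreach : ((powerGraph G).induce Sᶜ).Reachable z1 z2 := by
      by_cases hz12 : z1 = z2
      · rw [hz12]
      · exact SimpleGraph.Adj.reachable
          ((adj_iff z1 z2).mpr ⟨fun hh => hz12 (Subtype.ext hh), hcomp⟩)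
    exact hur ((huz1.trans hreach).trans hvz2.symm)
  · -- the common involution survives; it joins the two cycles
    have htc : t ∈ Sᶜ := htS
    have ha1 : ((powerGraph G).induce Sᶜ).Adj x1 ⟨t, htc⟩ := (adj_iff _ _).mpr
      ⟨by intro hh; rw [hh, ht2] at hx1o; omega, Or.inr htx1⟩
    have ha2 : ((powerGraph G).induce Sᶜ).Adj x2 ⟨t, htc⟩ := (adj_iff _ _).mpr
      ⟨by intro hh; rw [hh, ht2] at hx2o; omega, Or.inr htx2⟩
    exact hur (((hux1.trans ha1.reachable).trans ha2.reachable.symm).trans hvx2.symm)
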